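/- Feller property (Proposition 2.1, first part): For every continuous function f : 𝒮 → ℝ (for the product topology), the function 𝐦f : 𝒮 → ℝ is continuous. -/
import Mathlib


/-- Concatenation of a type `t` with a memory sequence `x`. -/
def memCons {S : Type*} (t : S) (x : ℕ → S) : ℕ → S
  | 0 => t
  | n + 1 => x n

theorem memCons_continuous {S : Type*} [TopologicalSpace S] (t : S) :
    Continuous (fun x : ℕ → S => memCons t x) := by
  apply continuous_pi
  intro n
  cases n with
  | zero => exact continuous_const
  | succ k => exact continuous_apply k

/-- **Proposition 2.1, first part (Feller property).** For every continuous
`f : 𝒮 → ℝ` (product topology on `𝒮 = S^ℕ`, `S` discrete), the function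
`𝐦f : 𝒮 → ℝ` is continuous. -/
theorem memory_operator_feller
    {S : Type*} [Fintype S] [Nonempty S] [DecidableEq S]
    [TopologicalSpace S] [DiscreteTopology S]
    (m : S → S → ℝ)
    (hm_nonneg : ∀ s t, 0 ≤ m s t)
    (τ : ℕ → ℝ)
    (hτ_nonneg : ∀ j, 0 ≤ τ j) (hτ_sum : HasSum τ 1)
    (f : (ℕ → S) → ℝ) (hf : Continuous f) :
    Continuous (fun x : ℕ → S =>
      ∑' j : ℕ, τ j * ∑ t : S, m (x j) t * f (memCons t x)) := by
  -- bound for f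
  obtain ⟨C, hC⟩ : ∃ C, ∀ x : ℕ → S, ‖f x‖ ≤ C := by
    obtain ⟨C, hC⟩ := isCompact_univ.exists_bound_of_continuousOn hf.continuousOn
    exact ⟨C, fun x => hC x (Set.mem_univ x)⟩
  have hC0 : 0 ≤ C := le_trans (norm_nonneg _) (hC (Classical.arbitrary _))
  -- bound for m
  set M : ℝ := ∑ s : S, ∑ t : S, m s t with hM
  have hMb : ∀ s t : S, m s t ≤ M := by
    intro s t
    calc m s t ≤ ∑ t : S, m s t :=
          Finset.single_le_sum (fun i _ => hm_nonneg s i) (Finset.mem_univ t)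
      _ ≤ M := Finset.single_le_sum
          (fun i _ => Finset.sum_nonneg fun j _ => hm_nonneg i j) (Finset.mem_univ s)
  have hM0 : 0 ≤ M := le_trans (hm_nonneg (Classical.arbitrary _) (Classical.arbitrary _))
    (hMb _ _)
  set K : ℝ := (Fintype.card S : ℝ) * (M * C) with hK
  apply continuous_tsum
    (u := fun j => τ j * K)
  · intro j
    apply Continuous.mul continuous_const
    apply continuous_finset_sum
    intro t _
    exact Continuous.mul
      (Continuous.comp (continuous_of_discreteTopology (f := fun s => m s t))
        (continuous_apply j))
      (hf.comp (memCons_continuous t))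
  · exact hτ_sum.summable.mul_right K
  · intro j x
    rw [norm_mul, Real.norm_of_nonneg (hτ_nonneg j)]
    apply mul_le_mul_of_nonneg_left _ (hτ_nonneg j)
    calc ‖∑ t : S, m (x j) t * f (memCons t x)‖
        ≤ ∑ t : S, ‖m (x j) t * f (memCons t x)‖ := norm_sum_le _ _
      _ ≤ ∑ _t : S, M * C := by
          apply Finset.sum_le_sum
          intro t _
          rw [norm_mul, Real.norm_of_nonneg (hm_nonneg _ _)]
          exact mul_le_mul (hMb _ _) (hC _) (norm_nonneg _) hM0
      _ = K := by simp [hK, Finset.sum_const, nsmul_eq_mul]
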